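/- Let p be a prime and f(T) = Σ_{n≥0} B_n T^n ∈ Q_p[[T]] with ord_p(B_n) ≥ -ord_p(n) + α(n) for all n ≥ 1, where α : N → Z is a (not necessarily strictly) decreasing function. Let g(t) = Σ_{i≥1} b_i t^i with all b_i ∈ Z_p. Then the composite f(g(t)) = B_0 + Σ_{n≥1} C_n t^n satisfies ord_p(C_n) ≥ -ord_p(n) + α(n) for all n ≥ 1. -/

import Mathlib

open PowerSeries

/-- If `f(T) = Σ Bₙ Tⁿ ∈ ℚ_p[[T]]` has `ord_p(Bₙ) ≥ -ord_p(n) + α(n)` for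
`n ≥ 1` with `α` a decreasing function, and `g(t) = Σ_{i≥1} bᵢ tⁱ` has `ℤ_p` coefficients and
zero constant term, then the coefficients `Cₙ` of the composite `f(g(t)) = B₀ + Σ_{n≥1} Cₙ tⁿ`,
given by `Cₙ = Σ_{m=1}^n Bₘ · (coefficient of tⁿ in g^m)`, satisfy
`ord_p(Cₙ) ≥ -ord_p(n) + α(n)` for all `n ≥ 1`. -/
theorem stmt_0 (p : ℕ) [Fact p.Prime]
    (B : ℕ → ℚ_[p]) (α : ℕ → ℤ) (hα : ∀ m n : ℕ, m ≤ n → α n ≤ α m)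
    (hB : ∀ n : ℕ, 1 ≤ n → B n ≠ 0 →
      -(padicValNat p n : ℤ) + α n ≤ (B n).valuation)
    (b : ℕ → ℤ_[p])
    (g : PowerSeries ℚ_[p])
    (hg : g = PowerSeries.mk fun i => if i = 0 then 0 else ((b i : ℚ_[p])))
    (C : ℕ → ℚ_[p])
    (hC : ∀ n : ℕ, 1 ≤ n →
      C n = ∑ m ∈ Finset.Icc 1 n, B m * PowerSeries.coeff n (g ^ m)) :
    ∀ n : ℕ, 1 ≤ n → C n ≠ 0 →
      -(padicValNat p n : ℤ) + α n ≤ (C n).valuation := by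
  intro n hn hCn
  have hp1 : (1:ℝ) < p := by exact_mod_cast (Fact.out : p.Prime).one_lt
  have hp0 : (0:ℝ) < p := lt_trans one_pos hp1
  set G : PowerSeries ℤ_[p] := PowerSeries.mk (fun i => if i = 0 then 0 else b i) with hG
  have hmap : g = PowerSeries.map (PadicInt.Coe.ringHom (p := p)) G := by
    rw [hg]
    ext k
    simp [G, PowerSeries.coeff_map, apply_ite (PadicInt.Coe.ringHom (p := p))]
    rfl
  have hnorm_nat : ∀ k : ℕ, k ≠ 0 → ‖(k : ℚ_[p])‖ = (p:ℝ) ^ (-(padicValNat p k : ℤ)) := by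
    intro k hk
    have hk' : (k : ℚ_[p]) ≠ 0 := Nat.cast_ne_zero.mpr hk
    rw [Padic.norm_eq_zpow_neg_valuation hk', Padic.valuation_natCast]
  -- bound each coefficient of g^m
  have hA : ∀ m : ℕ, m ∈ Finset.Icc 1 n →
      ‖(PowerSeries.coeff n (g ^ m))‖ ≤
        (p:ℝ) ^ ((padicValNat p n : ℤ) - (padicValNat p m : ℤ)) := by
    intro m hm
    obtain ⟨hm1, hmn⟩ := Finset.mem_Icc.mp hm
    obtain ⟨k, rfl⟩ : ∃ k, n = k + 1 := ⟨n - 1, (Nat.succ_pred_eq_of_pos hn).symm⟩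
    have key : (PowerSeries.coeff (k+1) (G ^ m)) * (k+1) =
        (m : ℤ_[p]) * (PowerSeries.coeff k (G ^ (m-1) * d⁄dX ℤ_[p] G)) := by
      have h1 := Derivation.leibniz_pow (d⁄dX ℤ_[p]) (a := G) m
      have h1' : (d⁄dX ℤ_[p]) (G ^ m) = (m : ℕ) • (G ^ (m-1) * (d⁄dX ℤ_[p]) G) := by
        rw [h1, smul_eq_mul]
      have h2 := congrArg (PowerSeries.coeff k) h1'
      rw [PowerSeries.coeff_derivative, map_nsmul, nsmul_eq_mul] at h2
      exact_mod_cast h2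
    have keyQ : (PowerSeries.coeff (k+1) (g ^ m)) * ((k+1 : ℕ) : ℚ_[p]) =
        ((m : ℕ) : ℚ_[p]) *
          ((PowerSeries.coeff k (G ^ (m-1) * d⁄dX ℤ_[p] G) : ℤ_[p]) : ℚ_[p]) := by
      have := congrArg (fun x : ℤ_[p] => (x : ℚ_[p])) key
      simp only [PadicInt.coe_mul] at this
      rw [hmap, ← map_pow, PowerSeries.coeff_map]
      change ((PowerSeries.coeff (k+1) (G ^ m) : ℤ_[p]) : ℚ_[p]) * _ = _
      convert this using 2 <;> push_cast <;> ring
    have hE : ‖((PowerSeries.coeff k (G ^ (m-1) * d⁄dX ℤ_[p] G) : ℤ_[p]) : ℚ_[p])‖ ≤ 1 := by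
      rw [PadicInt.padic_norm_e_of_padicInt]
      exact PadicInt.norm_le_one _
    have hnp : ‖((k+1 : ℕ) : ℚ_[p])‖ > 0 := by
      rw [hnorm_nat _ (Nat.succ_ne_zero k)]
      positivity
    have h3 : ‖PowerSeries.coeff (k+1) (g ^ m)‖ * ‖((k+1:ℕ) : ℚ_[p])‖ ≤
        ‖((m:ℕ) : ℚ_[p])‖ := by
      rw [← norm_mul, keyQ, norm_mul]
      exact mul_le_of_le_one_right (norm_nonneg _) hE
    have h4 : ‖PowerSeries.coeff (k+1) (g ^ m)‖ ≤
        ‖((m:ℕ) : ℚ_[p])‖ / ‖((k+1:ℕ) : ℚ_[p])‖ := (le_div_iff₀ hnp).mpr h3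
    refine h4.trans ?_
    rw [hnorm_nat m (by omega), hnorm_nat (k+1) (Nat.succ_ne_zero k),
      ← zpow_sub₀ (ne_of_gt hp0)]
    apply le_of_eq
    congr 1
    ring
  -- bound each term
  have hterm : ∀ m ∈ Finset.Icc 1 n,
      ‖B m * PowerSeries.coeff n (g ^ m)‖ ≤
        (p:ℝ) ^ ((padicValNat p n : ℤ) - α n) := by
    intro m hm
    obtain ⟨hm1, hmn⟩ := Finset.mem_Icc.mp hm
    by_cases hBm : B m = 0
    · simp [hBm]
      positivity
    have hBn : ‖B m‖ ≤ (p:ℝ) ^ ((padicValNat p m : ℤ) - α m) := by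
      rw [Padic.norm_eq_zpow_neg_valuation hBm]
      rw [zpow_le_zpow_iff_right₀ hp1]
      have := hB m hm1 hBm
      linarith
    calc ‖B m * PowerSeries.coeff n (g ^ m)‖
        = ‖B m‖ * ‖PowerSeries.coeff n (g ^ m)‖ := norm_mul _ _
      _ ≤ (p:ℝ) ^ ((padicValNat p m : ℤ) - α m) *
            (p:ℝ) ^ ((padicValNat p n : ℤ) - (padicValNat p m : ℤ)) := by
          apply mul_le_mul hBn (hA m hm) (norm_nonneg _) (by positivity)
      _ = (p:ℝ) ^ ((padicValNat p n : ℤ) - α m) := by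
          rw [← zpow_add₀ (ne_of_gt hp0)]; congr 1; ring
      _ ≤ (p:ℝ) ^ ((padicValNat p n : ℤ) - α n) := by
          rw [zpow_le_zpow_iff_right₀ hp1]
          have := hα m n hmn
          linarith
  have hsum : ‖C n‖ ≤ (p:ℝ) ^ ((padicValNat p n : ℤ) - α n) := by
    rw [hC n hn]
    exact IsUltrametricDist.norm_sum_le_of_forall_le_of_nonneg (by positivity) hterm
  rw [Padic.norm_eq_zpow_neg_valuation hCn, zpow_le_zpow_iff_right₀ hp1] at hsum
  linarith
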